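/- Let K be a compact Hausdorff space, φ : K → K an open continuous surjection, and F ⊆ K closed with φ(F) = F and φ^{(-1)}(F) = F. Suppose K \ F = ⋃_{n=0}^∞ φ^{(-n)}(K₂) for some closed set K₂ ⊆ K \ F with φ(K₂) = K₂. Then K₂ has nonempty interior in K. (Proof uses the Baire category theorem on the closed set K \ interior, plus openness of φ.) -/
import Mathlib


/-- Let `φ` be an open continuous surjection of a compact Hausdorff
space `K`, `F` a closed fully invariant set (`φ(F) = F = φ^{(-1)}(F)`), and `K₂` a
nonempty closed set disjoint from `F` with `φ(K₂) = K₂` such that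
`K \ F = ⋃_{n≥0} φ^{(-n)}(K₂)`. Then `K₂` has nonempty interior. -/
theorem stmt17 {K : Type*} [TopologicalSpace K] [CompactSpace K] [T2Space K]
    (φ : K → K) (hφc : Continuous φ) (hφo : IsOpenMap φ) (hφs : Function.Surjective φ)
    (F : Set K) (hFcl : IsClosed F) (hFim : φ '' F = F) (hFpre : φ ⁻¹' F = F)
    (K₂ : Set K) (hK₂cl : IsClosed K₂) (hK₂ne : K₂.Nonempty) (hK₂F : K₂ ⊆ Fᶜ)
    (hK₂im : φ '' K₂ = K₂)
    (hcover : Fᶜ = ⋃ n : ℕ, (fun k => φ^[n] k) ⁻¹' K₂) :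
    (interior K₂).Nonempty := by
  -- the closed sets covering K
  set C : ℕ → Set K := fun n => ((fun k => φ^[n] k) ⁻¹' K₂) ∪ F with hC
  have hCcl : ∀ n, IsClosed (C n) := fun n =>
    (hK₂cl.preimage (hφc.iterate n)).union hFcl
  have hCuniv : (⋃ n, C n) = Set.univ := by
    apply Set.eq_univ_of_forall
    intro x
    by_cases hx : x ∈ F
    · exact Set.mem_iUnion.2 ⟨0, Or.inr hx⟩
    · have : x ∈ (⋃ n : ℕ, (fun k => φ^[n] k) ⁻¹' K₂) := by
        rw [← hcover]; exact hx
      obtain ⟨n, hn⟩ := Set.mem_iUnion.1 this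
      exact Set.mem_iUnion.2 ⟨n, Or.inl hn⟩
  have hdense : Dense (⋃ n, interior (C n)) :=
    dense_iUnion_interior_of_closed hCcl hCuniv
  -- Fᶜ is open nonempty
  obtain ⟨x₀, hx₀⟩ := hK₂ne
  obtain ⟨x, hxU, hxF⟩ := hdense.exists_mem_open hFcl.isOpen_compl ⟨x₀, hK₂F hx₀⟩
  obtain ⟨n, hxn⟩ := Set.mem_iUnion.1 hxU
  -- U is open nonempty and contained in φ^{(-n)}(K₂)
  set U : Set K := interior (C n) ∩ Fᶜ with hU
  have hUopen : IsOpen U := isOpen_interior.inter hFcl.isOpen_compl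
  have hUne : U.Nonempty := ⟨x, hxn, hxF⟩
  have hUsub : U ⊆ (fun k => φ^[n] k) ⁻¹' K₂ := by
    rintro y ⟨hy1, hy2⟩
    rcases interior_subset hy1 with h | h
    · exact h
    · exact absurd h hy2
  have hφoI : ∀ m : ℕ, IsOpenMap (φ^[m]) := by
    intro m
    induction m with
    | zero => exact IsOpenMap.id
    | succ m ih =>
      rw [Function.iterate_succ']
      exact hφo.comp ih
  have hopen : IsOpen ((fun k => φ^[n] k) '' U) := (hφoI n) U hUopen
  have hsub : (fun k => φ^[n] k) '' U ⊆ K₂ := by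
    rintro _ ⟨y, hy, rfl⟩
    exact hUsub hy
  obtain ⟨y, hy⟩ := hUne
  exact ⟨φ^[n] y, interior_maximal hsub hopen ⟨y, hy, rfl⟩⟩
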